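/- The function x ↦ A(x) − (1/2)·x₂·sgn(x₃)·e^{−π(x₂²−x₃²)} is continuously differentiable (C¹) on all of ℝ². (Paper Lemma 5.5(ii).) -/

import Mathlib

open MeasureTheory Set Real

/-- The upper incomplete gamma function `Γ(1/2, a) = ∫_a^∞ e^{-u} u^{-1/2} du`. -/
noncomputable def Ginc (a : ℝ) : ℝ := ∫ u in Set.Ioi a, Real.exp (-u) * u ^ (-(1:ℝ)/2)

-- Gaussian integrable
lemma gauss_int : Integrable (fun s : ℝ => Real.exp (-(2 * π) * s ^ 2)) := by
  exact integrable_exp_neg_mul_sq (by positivity)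

-- split Ioi
lemma ioi_split (t : ℝ) (ht : 0 ≤ t) :
    (∫ s in Ioi t, Real.exp (-(2 * π) * s ^ 2)) =
      (∫ s in Ioi (0:ℝ), Real.exp (-(2 * π) * s ^ 2)) - ∫ s in (0:ℝ)..t, Real.exp (-(2 * π) * s ^ 2) := by
  have hu : Ioc (0:ℝ) t ∪ Ioi t = Ioi 0 := Ioc_union_Ioi_eq_Ioi ht
  have hd : Disjoint (Ioc (0:ℝ) t) (Ioi t) := Ioc_disjoint_Ioi le_rfl
  have := setIntegral_union hd measurableSet_Ioi
    (gauss_int.integrableOn (s := Ioc (0:ℝ) t)) (gauss_int.integrableOn (s := Ioi t))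
  rw [hu] at this
  rw [intervalIntegral.integral_of_le ht]
  linarith [this]

-- gaussian Ioi value
lemma gauss_val : (∫ s in Ioi (0:ℝ), Real.exp (-(2 * π) * s ^ 2)) = Real.sqrt (π / (2 * π)) / 2 :=
  integral_gaussian_Ioi (2 * π)

-- Ginc 0 = √π
lemma ginc_zero : Ginc 0 = Real.sqrt π := by
  rw [Ginc, ← Real.Gamma_one_half_eq, Real.Gamma_eq_integral (by norm_num : (0:ℝ) < 1/2)]
  norm_num

lemma himg (t : ℝ) (ht : 0 < t) : (fun s : ℝ => 2 * π * s ^ 2) '' Ioi t = Ioi (2 * π * t ^ 2) := by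
  ext y
  simp only [mem_image, mem_Ioi]
  constructor
  · rintro ⟨s, hs, rfl⟩
    have : t ^ 2 < s ^ 2 := by nlinarith
    nlinarith [Real.pi_pos]
  · intro hy'
    have h2p : (0:ℝ) < 2 * π := by positivity
    have hy0 : 0 ≤ y / (2 * π) := by
      have : 0 < y := lt_trans (by positivity) hy'
      positivity
    refine ⟨Real.sqrt (y / (2 * π)), ?_, ?_⟩
    · have h1 : t ^ 2 < y / (2 * π) := by rw [lt_div_iff₀ h2p]; nlinarith
      exact (Real.lt_sqrt (le_of_lt ht)).mpr h1
    · rw [Real.sq_sqrt hy0]; field_simp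

lemma gsub (t : ℝ) (ht : 0 < t) :
    Ginc (2 * π * t ^ 2) = 2 * Real.sqrt (2 * π) * ∫ s in Ioi t, Real.exp (-(2 * π) * s ^ 2) := by
  have key := integral_image_eq_integral_abs_deriv_smul (s := Ioi t)
    (f := fun s => 2 * π * s ^ 2) (f' := fun s => 2 * π * (2 * s)) measurableSet_Ioi
    (fun x _ => ((hasDerivAt_pow 2 x).const_mul (2 * π)).hasDerivWithinAt.congr_deriv (by ring))
    (fun a ha b hb hab => by
      simp only [mem_Ioi] at ha hb
      have h2p : (0:ℝ) < 2 * π := by positivity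
      have h2 : a ^ 2 = b ^ 2 := mul_left_cancel₀ h2p.ne' hab
      have := congrArg Real.sqrt h2
      rwa [Real.sqrt_sq (by linarith), Real.sqrt_sq (by linarith)] at this)
    (fun u => Real.exp (-u) * u ^ (-(1:ℝ)/2))
  rw [Ginc, ← himg t ht, key]
  rw [← MeasureTheory.integral_const_mul (2 * Real.sqrt (2 * π)) _]
  apply setIntegral_congr_fun measurableSet_Ioi
  intro s hs
  have hs0 : 0 < s := lt_trans ht hs
  have h2p : (0:ℝ) < 2 * π := by positivity
  have hrp : (2 * π * s ^ 2 : ℝ) ^ (-(1:ℝ)/2) = (Real.sqrt (2 * π) * s)⁻¹ := by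
    have hb : (2 * π * s ^ 2 : ℝ) = (Real.sqrt (2 * π) * s) ^ 2 := by
      rw [mul_pow, Real.sq_sqrt h2p.le]
    rw [hb, ← Real.rpow_natCast (Real.sqrt (2 * π) * s) 2, ← Real.rpow_mul (by positivity)]
    have he : ((2:ℕ):ℝ) * (-(1:ℝ)/2) = -1 := by norm_num
    rw [he, Real.rpow_neg_one]
  simp only [smul_eq_mul, hrp]
  rw [abs_of_pos (by positivity)]
  have hne : Real.sqrt (2 * π) ≠ 0 := ne_of_gt (Real.sqrt_pos.mpr h2p)
  have hsq : Real.sqrt (2 * π) * Real.sqrt (2 * π) = 2 * π := Real.mul_self_sqrt h2p.le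
  rw [show -(2 * π) * s ^ 2 = -(2 * π * s ^ 2) by ring]
  have h1 : Real.sqrt 2 ^ 2 = 2 := Real.sq_sqrt (by norm_num)
  have h2 : Real.sqrt π ^ 2 = π := Real.sq_sqrt Real.pi_pos.le
  have h3 : Real.sqrt (2 * π) ^ 2 = 2 * π := Real.sq_sqrt h2p.le
  field_simp
  linear_combination (-1 : ℝ) * h3

-- the key identity
lemma key (t : ℝ) :
    Real.sign t * Ginc (2 * π * t ^ 2) - Real.sqrt π * Real.sign t =
      -(2 * Real.sqrt (2 * π)) * ∫ s in (0:ℝ)..t, Real.exp (-(2 * π) * s ^ 2) := by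
  have h2p : (0:ℝ) < 2 * π := by positivity
  have hne : Real.sqrt (2 * π) ≠ 0 := ne_of_gt (Real.sqrt_pos.mpr h2p)
  have hconst : 2 * Real.sqrt (2 * π) * (Real.sqrt (π / (2 * π)) / 2) = Real.sqrt π := by
    rw [Real.sqrt_div Real.pi_pos.le]
    field_simp
  rcases lt_trichotomy t 0 with hlt | rfl | hgt
  · rw [Real.sign_of_neg hlt]
    have h1 : (2 : ℝ) * π * t ^ 2 = 2 * π * (-t) ^ 2 := by ring
    rw [h1, gsub (-t) (by linarith), ioi_split (-t) (by linarith), gauss_val]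
    have h2 : (∫ s in (0:ℝ)..(-t), Real.exp (-(2 * π) * s ^ 2)) =
        -∫ s in (0:ℝ)..t, Real.exp (-(2 * π) * s ^ 2) := by
      calc (∫ s in (0:ℝ)..(-t), Real.exp (-(2 * π) * s ^ 2))
          = ∫ s in (0:ℝ)..(-t), Real.exp (-(2 * π) * (-s) ^ 2) := by
            apply intervalIntegral.integral_congr; intro s _; ring_nf
        _ = ∫ s in t..(0:ℝ), Real.exp (-(2 * π) * s ^ 2) := by
            rw [intervalIntegral.integral_comp_neg (fun s => Real.exp (-(2 * π) * s ^ 2))]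
            norm_num
        _ = -∫ s in (0:ℝ)..t, Real.exp (-(2 * π) * s ^ 2) := intervalIntegral.integral_symm 0 t
    rw [h2]
    linarith [hconst]
  · simp [Real.sign_zero]
  · rw [Real.sign_of_pos hgt, gsub t hgt, ioi_split t hgt.le, gauss_val]
    linarith [hconst]


lemma gcont : ContDiff ℝ 1 (fun t : ℝ => ∫ s in (0:ℝ)..t, Real.exp (-(2 * π) * s ^ 2)) := by
  have hc : Continuous (fun s : ℝ => Real.exp (-(2 * π) * s ^ 2)) := by fun_prop
  have hd : ∀ t : ℝ, HasDerivAt (fun t : ℝ => ∫ s in (0:ℝ)..t, Real.exp (-(2 * π) * s ^ 2))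
      (Real.exp (-(2 * π) * t ^ 2)) t := fun t => (hc.integral_hasStrictDerivAt 0 t).hasDerivAt
  rw [contDiff_one_iff_deriv]
  refine ⟨fun t => (hd t).differentiableAt, ?_⟩
  have : deriv (fun t : ℝ => ∫ s in (0:ℝ)..t, Real.exp (-(2 * π) * s ^ 2))
      = fun t => Real.exp (-(2 * π) * t ^ 2) := funext fun t => (hd t).deriv
  rw [this]; exact hc

lemma alg (c a G e I sπ : ℝ) (hπ : sπ ≠ 0)
    (hk : a * G - sπ * a = -(2 * (Real.sqrt 2 * sπ)) * I) :
    (1 / (2 * sπ)) * c * a * G * e - 1/2 * c * a * e = (-(Real.sqrt 2)) * c * I * e := by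
  field_simp
  linear_combination (c * e) * hk

/-- The `e₂`-component `A` of the singular Schwartz function `ψ̃₀,₁`. -/
noncomputable def A (x : ℝ × ℝ) : ℝ :=
  (1 / (2 * Real.sqrt Real.pi)) * x.1 * Real.sign x.2 * Ginc (2 * Real.pi * x.2 ^ 2) *
    Real.exp (-(Real.pi * (x.1 ^ 2 - x.2 ^ 2)))

/-- Paper Lemma 5.5(ii): `A(x) - (1/2)x₂·sgn(x₃)·e^{-π(x₂²-x₃²)}` is `C¹` on all of `ℝ²`. -/
theorem stmt3 :
    ContDiff ℝ 1 (fun x : ℝ × ℝ =>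
      A x - (1/2) * x.1 * Real.sign x.2 * Real.exp (-(Real.pi * (x.1 ^ 2 - x.2 ^ 2)))) := by
  have hrw : (fun x : ℝ × ℝ =>
      A x - (1/2) * x.1 * Real.sign x.2 * Real.exp (-(Real.pi * (x.1 ^ 2 - x.2 ^ 2))))
      = fun x : ℝ × ℝ => (-(Real.sqrt 2)) * x.1 *
          (∫ s in (0:ℝ)..x.2, Real.exp (-(2 * π) * s ^ 2)) *
          Real.exp (-(Real.pi * (x.1 ^ 2 - x.2 ^ 2))) := by
    funext x
    have hπ : Real.sqrt π ≠ 0 := ne_of_gt (Real.sqrt_pos.mpr Real.pi_pos)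
    have hk := key x.2
    have hs2 : Real.sqrt (2 * π) = Real.sqrt 2 * Real.sqrt π := Real.sqrt_mul (by norm_num) π
    rw [hs2] at hk
    rw [A]
    exact alg _ _ _ _ _ _ hπ hk
  rw [hrw]
  have hexp : ContDiff ℝ 1 (fun x : ℝ × ℝ => Real.exp (-(Real.pi * (x.1 ^ 2 - x.2 ^ 2)))) :=
    Real.contDiff_exp.comp (contDiff_const.mul ((contDiff_fst.pow 2).sub (contDiff_snd.pow 2))).neg
  exact ((contDiff_const.mul contDiff_fst).mul (gcont.comp contDiff_snd)).mul hexp
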